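/- For N balls thrown independently and uniformly into M boxes and two disjoint sets S, T of boxes, the events 'every box in S is occupied' and 'every box in T is occupied' are negatively correlated: P(both) ≤ P(every box in S occupied) · P(every box in T occupied). -/

import Mathlib

open MeasureTheory Finset

/-- `N` balls thrown independently and uniformly into `M` boxes. -/
noncomputable def ballsMeasure (N M : ℕ) [NeZero M] : Measure (Fin N → Fin M) :=
  (PMF.uniformOfFintype (Fin N → Fin M)).toMeasure

section NA

variable {M : ℕ}

/-- occupancy counts -/
def cnt {N : ℕ} (ω : Fin N → Fin M) (j : Fin M) : ℕ :=
  (Finset.univ.filter fun i => ω i = j).card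

/-- single ball indicator vector -/
def eb (x j : Fin M) : ℕ := if x = j then 1 else 0

lemma cnt_cons {N : ℕ} (x : Fin M) (ω : Fin N → Fin M) :
    cnt (Fin.cons x ω) = cnt ω + eb x := by
  funext j
  simp only [cnt, eb, Pi.add_apply, Finset.card_filter]
  rw [Fin.sum_univ_succ]
  simp [Fin.cons, add_comm]
  rw [Finset.card_filter]
  convert rfl <;> rfl

lemma le_cnt_add_eb (c : Fin M → ℕ) (x : Fin M) : c ≤ c + eb x :=
  fun j => Nat.le_add_right _ _

lemma eb_eq_on_compl {S : Finset (Fin M)} {x : Fin M} (hx : x ∉ S)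
    (c : Fin M → ℕ) : ∀ j ∈ S, (c + eb x) j = c j := by
  intro j hj
  have : x ≠ j := fun h => hx (h ▸ hj)
  simp [eb, this]

/-- Single-ball negative association step: conditional on current counts `c`. -/
lemma single_ball (S T : Finset (Fin M)) (hST : Disjoint S T)
    (f g : (Fin M → ℕ) → ℝ) (hf : Monotone f) (hg : Monotone g)
    (hfS : ∀ c c', (∀ j ∈ S, c j = c' j) → f c = f c')
    (hgT : ∀ c c', (∀ j ∈ T, c j = c' j) → g c = g c')
    (c : Fin M → ℕ) :
    (∑ x : Fin M, f (c + eb x) * g (c + eb x)) * M ≤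
      (∑ x : Fin M, f (c + eb x)) * (∑ x : Fin M, g (c + eb x)) := by
  set a := f c with ha
  set b := g c with hb
  have h0 : ∀ x : Fin M, (f (c + eb x) - a) * (g (c + eb x) - b) = 0 := by
    intro x
    by_cases hx : x ∈ S
    · have hxT : x ∉ T := fun hT => (Finset.disjoint_left.mp hST hx) hT
      have : g (c + eb x) = b := hgT _ _ (eb_eq_on_compl hxT c)
      rw [this]; ring
    · have : f (c + eb x) = a := hfS _ _ (eb_eq_on_compl hx c)
      rw [this]; ring
  have hexp : ∀ x : Fin M, f (c + eb x) * g (c + eb x)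
      = a * g (c + eb x) + b * f (c + eb x) - a * b := by
    intro x
    have h := h0 x
    linear_combination h
  have hsum : (∑ x : Fin M, f (c + eb x) * g (c + eb x))
      = a * (∑ x : Fin M, g (c + eb x)) + b * (∑ x : Fin M, f (c + eb x))
        - M * (a * b) := by
    rw [Finset.sum_congr rfl (fun x _ => hexp x)]
    simp only [Finset.sum_sub_distrib, Finset.sum_add_distrib, ← Finset.mul_sum,
      Finset.sum_const, Finset.card_univ, Fintype.card_fin, nsmul_eq_mul]
    ring
  have hA : (M : ℝ) * a ≤ ∑ x : Fin M, f (c + eb x) := by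
    calc (M : ℝ) * a = ∑ _x : Fin M, a := by simp [Finset.card_univ, mul_comm]
    _ ≤ _ := Finset.sum_le_sum (fun x _ => hf (le_cnt_add_eb c x))
  have hB : (M : ℝ) * b ≤ ∑ x : Fin M, g (c + eb x) := by
    calc (M : ℝ) * b = ∑ _x : Fin M, b := by simp [Finset.card_univ, mul_comm]
    _ ≤ _ := Finset.sum_le_sum (fun x _ => hg (le_cnt_add_eb c x))
  rw [hsum]
  nlinarith [mul_nonneg (sub_nonneg.mpr hA) (sub_nonneg.mpr hB)]

/-- Key negative association lemma for occupancy counts. -/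
lemma key_NA (S T : Finset (Fin M)) (hST : Disjoint S T) :
    ∀ (N : ℕ) (f g : (Fin M → ℕ) → ℝ), Monotone f → Monotone g →
    (∀ c, 0 ≤ f c) → (∀ c, 0 ≤ g c) →
    (∀ c c', (∀ j ∈ S, c j = c' j) → f c = f c') →
    (∀ c c', (∀ j ∈ T, c j = c' j) → g c = g c') →
    (∑ ω : Fin N → Fin M, f (cnt ω) * g (cnt ω)) * (M : ℝ) ^ N ≤
      (∑ ω : Fin N → Fin M, f (cnt ω)) * (∑ ω : Fin N → Fin M, g (cnt ω)) := by
  intro N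
  induction N with
  | zero =>
    intro f g _ _ _ _ _ _
    simp
  | succ N ih =>
    intro f g hf hg hf0 hg0 hfS hgT
    -- reindex sums over Fin (N+1) → Fin M as double sums
    have hsplit : ∀ (h : (Fin M → ℕ) → ℝ),
        (∑ ω : Fin (N+1) → Fin M, h (cnt ω))
          = ∑ ω : Fin N → Fin M, ∑ x : Fin M, h (cnt ω + eb x) := by
      intro h
      rw [← Fintype.sum_equiv (Fin.consEquiv (fun _ => Fin M))
        (fun p => h (cnt (Fin.cons p.1 p.2))) (fun ω => h (cnt ω)) (fun p => rfl)]
      rw [Fintype.sum_prod_type_right]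
      exact Finset.sum_congr rfl fun ω _ => Finset.sum_congr rfl fun x _ => by
        rw [cnt_cons]
    set F : (Fin M → ℕ) → ℝ := fun c => ∑ x : Fin M, f (c + eb x) with hF
    set G : (Fin M → ℕ) → ℝ := fun c => ∑ x : Fin M, g (c + eb x) with hG
    have hFmono : Monotone F := fun c c' hcc =>
      Finset.sum_le_sum fun x _ => hf (fun j => by
        simp only [Pi.add_apply]; exact Nat.add_le_add_right (hcc j) _)
    have hGmono : Monotone G := fun c c' hcc =>
      Finset.sum_le_sum fun x _ => hg (fun j => by
        simp only [Pi.add_apply]; exact Nat.add_le_add_right (hcc j) _)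
    have hF0 : ∀ c, 0 ≤ F c := fun c => Finset.sum_nonneg fun x _ => hf0 _
    have hG0 : ∀ c, 0 ≤ G c := fun c => Finset.sum_nonneg fun x _ => hg0 _
    have hFS : ∀ c c', (∀ j ∈ S, c j = c' j) → F c = F c' := by
      intro c c' h
      exact Finset.sum_congr rfl fun x _ => hfS _ _ (fun j hj => by
        simp only [Pi.add_apply, h j hj])
    have hGT : ∀ c c', (∀ j ∈ T, c j = c' j) → G c = G c' := by
      intro c c' h
      exact Finset.sum_congr rfl fun x _ => hgT _ _ (fun j hj => by
        simp only [Pi.add_apply, h j hj])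
    have step1 : (∑ ω : Fin (N+1) → Fin M, f (cnt ω) * g (cnt ω)) * (M : ℝ)
        ≤ ∑ ω : Fin N → Fin M, F (cnt ω) * G (cnt ω) := by
      rw [hsplit (fun c => f c * g c), Finset.sum_mul]
      exact Finset.sum_le_sum fun ω _ =>
        single_ball S T hST f g hf hg hfS hgT (cnt ω)
    have step2 : (∑ ω : Fin N → Fin M, F (cnt ω) * G (cnt ω)) * (M : ℝ) ^ N
        ≤ (∑ ω : Fin N → Fin M, F (cnt ω)) * (∑ ω : Fin N → Fin M, G (cnt ω)) :=
      ih F G hFmono hGmono hF0 hG0 hFS hGT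
    calc (∑ ω : Fin (N+1) → Fin M, f (cnt ω) * g (cnt ω)) * (M : ℝ) ^ (N+1)
        = ((∑ ω : Fin (N+1) → Fin M, f (cnt ω) * g (cnt ω)) * (M:ℝ)) * (M:ℝ)^N := by
          ring
      _ ≤ (∑ ω : Fin N → Fin M, F (cnt ω) * G (cnt ω)) * (M : ℝ) ^ N := by
          apply mul_le_mul_of_nonneg_right step1 (by positivity)
      _ ≤ (∑ ω : Fin N → Fin M, F (cnt ω)) * (∑ ω : Fin N → Fin M, G (cnt ω)) := step2
      _ = (∑ ω : Fin (N+1) → Fin M, f (cnt ω)) * (∑ ω : Fin (N+1) → Fin M, g (cnt ω)) := by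
          rw [hsplit f, hsplit g]

/-- Specialization to indicator functions: counting form. -/
lemma counting (N : ℕ) (S T : Finset (Fin M)) (hST : Disjoint S T) :
    ((Finset.univ.filter fun ω : Fin N → Fin M =>
        (∀ s ∈ S, ∃ i, ω i = s) ∧ (∀ t ∈ T, ∃ i, ω i = t)).card) * M ^ N ≤
      ((Finset.univ.filter fun ω : Fin N → Fin M => ∀ s ∈ S, ∃ i, ω i = s).card) *
        ((Finset.univ.filter fun ω : Fin N → Fin M => ∀ t ∈ T, ∃ i, ω i = t).card) := by
  classical
  set f : (Fin M → ℕ) → ℝ := fun c => if ∀ s ∈ S, 1 ≤ c s then 1 else 0 with hfdef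
  set g : (Fin M → ℕ) → ℝ := fun c => if ∀ t ∈ T, 1 ≤ c t then 1 else 0 with hgdef
  have hmono : ∀ (U : Finset (Fin M)),
      Monotone (fun c : Fin M → ℕ => if ∀ s ∈ U, 1 ≤ c s then (1:ℝ) else 0) := by
    intro U c c' hcc
    dsimp only
    split_ifs with h1 h2
    · exact le_refl _
    · exact absurd (fun s hs => le_trans (h1 s hs) (hcc s)) h2
    · norm_num
    · exact le_refl _
  have hdep : ∀ (U : Finset (Fin M)) (c c' : Fin M → ℕ), (∀ j ∈ U, c j = c' j) →
      (if ∀ s ∈ U, 1 ≤ c s then (1:ℝ) else 0) = (if ∀ s ∈ U, 1 ≤ c' s then 1 else 0) := by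
    intro U c c' h
    have : (∀ s ∈ U, 1 ≤ c s) ↔ (∀ s ∈ U, 1 ≤ c' s) := by
      constructor <;> intro hh s hs
      · rw [← h s hs]; exact hh s hs
      · rw [h s hs]; exact hh s hs
    simp only [this]
  have hoc : ∀ (ω : Fin N → Fin M) (s : Fin M), (1 ≤ cnt ω s) ↔ ∃ i, ω i = s := by
    intro ω s
    rw [cnt, Nat.one_le_iff_ne_zero, Ne, Finset.card_eq_zero,
      ← Finset.not_nonempty_iff_eq_empty, not_not, Finset.filter_nonempty_iff]
    simp
  have key := key_NA S T hST N f g (hmono S) (hmono T)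
    (fun c => by dsimp [f]; split <;> norm_num)
    (fun c => by dsimp [g]; split <;> norm_num)
    (fun c c' h => hdep S c c' h) (fun c c' h => hdep T c c' h)
  have hprod : ∀ (P Q : Prop) (_ : Decidable P) (_ : Decidable Q),
      (if P then (1:ℝ) else 0) * (if Q then 1 else 0) = if P ∧ Q then 1 else 0 := by
    intro P Q _ _
    split_ifs <;> simp_all
  have hfsum : (∑ ω : Fin N → Fin M, f (cnt ω))
      = ((Finset.univ.filter fun ω : Fin N → Fin M => ∀ s ∈ S, ∃ i, ω i = s).card : ℝ) := by
    rw [show (∑ ω : Fin N → Fin M, f (cnt ω))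
        = ∑ ω : Fin N → Fin M, if ∀ s ∈ S, ∃ i, ω i = s then (1:ℝ) else 0 from
      Finset.sum_congr rfl fun ω _ => if_congr
        (forall₂_congr fun s hs => hoc ω s) rfl rfl]
    rw [Finset.sum_boole]
  have hgsum : (∑ ω : Fin N → Fin M, g (cnt ω))
      = ((Finset.univ.filter fun ω : Fin N → Fin M => ∀ t ∈ T, ∃ i, ω i = t).card : ℝ) := by
    rw [show (∑ ω : Fin N → Fin M, g (cnt ω))
        = ∑ ω : Fin N → Fin M, if ∀ t ∈ T, ∃ i, ω i = t then (1:ℝ) else 0 from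
      Finset.sum_congr rfl fun ω _ => if_congr
        (forall₂_congr fun t ht => hoc ω t) rfl rfl]
    rw [Finset.sum_boole]
  have hfgsum : (∑ ω : Fin N → Fin M, f (cnt ω) * g (cnt ω))
      = ((Finset.univ.filter fun ω : Fin N → Fin M =>
          (∀ s ∈ S, ∃ i, ω i = s) ∧ (∀ t ∈ T, ∃ i, ω i = t)).card : ℝ) := by
    rw [show (∑ ω : Fin N → Fin M, f (cnt ω) * g (cnt ω))
        = ∑ ω : Fin N → Fin M,
            if (∀ s ∈ S, ∃ i, ω i = s) ∧ (∀ t ∈ T, ∃ i, ω i = t) then (1:ℝ) else 0 from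
      Finset.sum_congr rfl fun ω _ => by
        rw [hprod _ _ _ _]
        exact if_congr (and_congr (forall₂_congr fun s hs => hoc ω s)
          (forall₂_congr fun t ht => hoc ω t)) rfl rfl]
    rw [Finset.sum_boole]
  rw [hfsum, hgsum, hfgsum] at key
  exact_mod_cast key

end NA

theorem stmt17 (N M : ℕ) (hN : 1 ≤ N) [NeZero M]
    (S T : Finset (Fin M)) (hST : Disjoint S T) :
    ballsMeasure N M
        ({ω | ∀ s ∈ S, ∃ i, ω i = s} ∩ {ω | ∀ t ∈ T, ∃ i, ω i = t}) ≤
      ballsMeasure N M {ω | ∀ s ∈ S, ∃ i, ω i = s} *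
        ballsMeasure N M {ω | ∀ t ∈ T, ∃ i, ω i = t} := by
  classical
  have hcard : Fintype.card (Fin N → Fin M) = M ^ N := by
    simp [Fintype.card_fun]
  -- measure of a set as card / M^N
  have hmeas : ∀ (p : (Fin N → Fin M) → Prop) [DecidablePred p],
      ballsMeasure N M {ω | p ω}
        = ((Finset.univ.filter p).card : ENNReal) * ((M : ENNReal) ^ N)⁻¹ := by
    intro p _
    rw [ballsMeasure, PMF.toMeasure_apply_fintype]
    have hpt : ∀ ω : Fin N → Fin M,
        Set.indicator {ω | p ω} (⇑(PMF.uniformOfFintype (Fin N → Fin M))) ω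
          = if p ω then ((M : ENNReal) ^ N)⁻¹ else 0 := by
      intro ω
      rw [Set.indicator_apply]
      by_cases h : p ω
      · simp [h, PMF.uniformOfFintype_apply, hcard]
      · simp [h]
    rw [Finset.sum_congr rfl fun ω _ => hpt ω, Finset.sum_ite, Finset.sum_const,
      Finset.sum_const_zero, add_zero, nsmul_eq_mul]
  have key := counting (M := M) N S T hST
  set a := (Finset.univ.filter fun ω : Fin N → Fin M =>
      (∀ s ∈ S, ∃ i, ω i = s) ∧ (∀ t ∈ T, ∃ i, ω i = t)).card with hadef
  set b := (Finset.univ.filter fun ω : Fin N → Fin M => ∀ s ∈ S, ∃ i, ω i = s).card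
  set c := (Finset.univ.filter fun ω : Fin N → Fin M => ∀ t ∈ T, ∃ i, ω i = t).card
  have hI : ({ω : Fin N → Fin M | ∀ s ∈ S, ∃ i, ω i = s}
      ∩ {ω | ∀ t ∈ T, ∃ i, ω i = t})
      = {ω | (∀ s ∈ S, ∃ i, ω i = s) ∧ (∀ t ∈ T, ∃ i, ω i = t)} := rfl
  rw [hI, hmeas (fun ω => (∀ s ∈ S, ∃ i, ω i = s) ∧ (∀ t ∈ T, ∃ i, ω i = t)),
    hmeas (fun ω => ∀ s ∈ S, ∃ i, ω i = s), hmeas (fun ω => ∀ t ∈ T, ∃ i, ω i = t)]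
  have hK0 : ((M : ENNReal) ^ N) ≠ 0 := by
    apply pow_ne_zero
    exact_mod_cast Nat.cast_ne_zero.mpr (NeZero.ne M)
  have hKtop : ((M : ENNReal) ^ N) ≠ ⊤ := by
    apply ENNReal.pow_ne_top
    exact ENNReal.natCast_ne_top M
  have hcast : (a : ENNReal) * (M : ENNReal) ^ N ≤ (b : ENNReal) * (c : ENNReal) := by
    have : ((a * M ^ N : ℕ) : ENNReal) ≤ ((b * c : ℕ) : ENNReal) := by exact_mod_cast key
    push_cast at this
    convert this using 2
  calc (a : ENNReal) * ((M : ENNReal) ^ N)⁻¹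
      = (a : ENNReal) * (M : ENNReal) ^ N * (((M : ENNReal) ^ N)⁻¹ * ((M : ENNReal) ^ N)⁻¹) := by
        rw [mul_assoc, ← mul_assoc ((M : ENNReal) ^ N), ENNReal.mul_inv_cancel hK0 hKtop,
          one_mul]
    _ ≤ (b : ENNReal) * (c : ENNReal) * (((M : ENNReal) ^ N)⁻¹ * ((M : ENNReal) ^ N)⁻¹) := by
        exact mul_le_mul_left hcast _
    _ = (b : ENNReal) * ((M : ENNReal) ^ N)⁻¹ * ((c : ENNReal) * ((M : ENNReal) ^ N)⁻¹) := by
        ring
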